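/- Let Q be an N×N complex Hermitian positive definite matrix and A an N×N complex Hermitian matrix. Fix an index k and let Q′, A′ be the (N−1)×(N−1) principal submatrices of Q and A obtained by deleting the k-th row and column of each. Then all eigenvalues of Q⁻¹A and of Q′⁻¹A′ are real, and listing them in decreasing order with multiplicity as a_1 ≥ … ≥ a_N and b_1 ≥ … ≥ b_{N−1}, they interlace: a_{j+1} ≤ b_j ≤ a_j for every j = 1, …, N−1. -/

import Mathlib

open Matrix Polynomial
open scoped ComplexOrder

namespace Stmt1Aux

variable {N n : ℕ}

lemma charpoly_conj (P B : Matrix (Fin N) (Fin N) ℂ) (hP : IsUnit P.det) :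
    (P⁻¹ * B * P).charpoly = B.charpoly := by
  have h1 : P⁻¹ * P = 1 := nonsing_inv_mul P hP
  have key : charmatrix (P⁻¹ * B * P)
      = (P⁻¹).map C * charmatrix B * P.map C := by
    show Matrix.scalar _ X - (C : ℂ →+* ℂ[X]).mapMatrix (P⁻¹ * B * P)
      = (P⁻¹).map C * (Matrix.scalar _ X - (C : ℂ →+* ℂ[X]).mapMatrix B) * P.map C
    have hsc : ∀ M : Matrix (Fin N) (Fin N) ℂ[X],
        Matrix.scalar _ (X : ℂ[X]) * M = M * Matrix.scalar _ (X : ℂ[X]) :=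
      fun M => Matrix.scalar_commute (X : ℂ[X]) (fun r => Commute.all _ _) M
    simp only [RingHom.mapMatrix_apply, mul_sub, sub_mul]
    rw [← hsc ((P⁻¹).map C), mul_assoc, mul_assoc,
      show P⁻¹.map (C : ℂ →+* ℂ[X]) * P.map C = (P⁻¹ * P).map C from (Matrix.map_mul).symm,
      h1, Matrix.map_one _ (map_zero C) (map_one C), mul_one]
    congr 1
    simp [Matrix.map_mul, Matrix.mul_assoc]
  rw [Matrix.charpoly, Matrix.charpoly, key, det_mul, det_mul, mul_comm, ← mul_assoc,
    ← det_mul, ← Matrix.map_mul, mul_nonsing_inv P hP]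
  simp

lemma antitone_eq {m : ℕ} {a b : Fin m → ℝ} (ha : Antitone a) (hb : Antitone b)
    (h : Multiset.map a Finset.univ.val = Multiset.map b Finset.univ.val) : a = b := by
  have hperm : (List.ofFn a).Perm (List.ofFn b) := by
    rw [← Multiset.coe_eq_coe]
    simpa [Fin.univ_val_map] using h
  have hsa : (List.ofFn a).Pairwise (· ≥ ·) :=
    List.pairwise_ofFn.mpr fun i j hij => ha hij.le
  have hsb : (List.ofFn b).Pairwise (· ≥ ·) :=
    List.pairwise_ofFn.mpr fun i j hij => hb hij.le
  exact List.ofFn_injective (List.Perm.eq_of_pairwise' hsa hsb hperm)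

lemma sq_form {ι : Type} [Fintype ι] (V : Matrix (Fin N) ι ℂ) (B : Matrix (Fin N) (Fin N) ℂ)
    (c : ι → ℂ) :
    star (V *ᵥ c) ⬝ᵥ B *ᵥ (V *ᵥ c) = star c ⬝ᵥ (Vᴴ * B * V) *ᵥ c := by
  rw [star_mulVec, mulVec_mulVec, dotProduct_mulVec, vecMul_vecMul,
    dotProduct_mulVec, Matrix.mul_assoc]

lemma sq_form_diag {ι : Type} [Fintype ι] [DecidableEq ι] (V : Matrix (Fin N) ι ℂ)
    (B : Matrix (Fin N) (Fin N) ℂ) (t : ι → ℝ)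
    (h : Vᴴ * B * V = diagonal fun i => (t i : ℂ)) (c : ι → ℂ) :
    star (V *ᵥ c) ⬝ᵥ B *ᵥ (V *ᵥ c) = ((∑ i, Complex.normSq (c i) * t i : ℝ) : ℂ) := by
  rw [sq_form, h]
  push_cast
  simp only [dotProduct, Pi.star_apply, mulVec_diagonal]
  refine Finset.sum_congr rfl fun i _ => ?_
  have hn : ((Complex.normSq (c i) : ℂ)) = (starRingEnd ℂ) (c i) * c i :=
    Complex.normSq_eq_conj_mul_self
  rw [hn]; simp only [Complex.star_def]
  ring

lemma mulVec_eq_sum {ι : Type} [Fintype ι] (V : Matrix (Fin N) ι ℂ) (c : ι → ℂ) :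
    V *ᵥ c = ∑ i, c i • Vᵀ i := by
  funext r
  simp [mulVec, dotProduct, Finset.sum_apply, mul_comm]

lemma core {ι₁ ι₂ : Type} [Fintype ι₁] [DecidableEq ι₁] [Fintype ι₂] [DecidableEq ι₂]
    {Q A : Matrix (Fin N) (Fin N) ℂ}
    (V : Matrix (Fin N) ι₁ ℂ) (W : Matrix (Fin N) ι₂ ℂ) (μ : ι₁ → ℝ) (ν : ι₂ → ℝ) {c d : ℝ}
    (hVQ : Vᴴ * Q * V = 1) (hVA : Vᴴ * A * V = diagonal fun i => (μ i : ℂ))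
    (hWQ : Wᴴ * Q * W = 1) (hWA : Wᴴ * A * W = diagonal fun i => (ν i : ℂ))
    (hμ : ∀ i, μ i ≤ c) (hν : ∀ i, d ≤ ν i)
    (hcard : N < Fintype.card ι₁ + Fintype.card ι₂) : d ≤ c := by
  have hVQ' : Vᴴ * Q * V = diagonal fun _ : ι₁ => ((1 : ℝ) : ℂ) := by
    rw [hVQ]; simp
  have hWQ' : Wᴴ * Q * W = diagonal fun _ : ι₂ => ((1 : ℝ) : ℂ) := by
    rw [hWQ]; simp
  have hli : ∀ {ι : Type} [Fintype ι] [DecidableEq ι] (U : Matrix (Fin N) ι ℂ),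
      Uᴴ * Q * U = diagonal (fun _ : ι => ((1 : ℝ) : ℂ)) →
      LinearIndependent ℂ (fun i => Uᵀ i) := by
    intro ι _ _ U hU
    rw [Fintype.linearIndependent_iff]
    intro g hg
    have h0 : U *ᵥ g = 0 := by rw [mulVec_eq_sum, hg]
    have := sq_form_diag U Q (fun _ => 1) hU g
    rw [h0] at this
    simp only [Matrix.mulVec_zero, dotProduct_zero, star_zero, zero_dotProduct] at this
    have hsum : (∑ i, Complex.normSq (g i) * 1) = 0 := by
      exact_mod_cast this.symm
    intro i
    have : Complex.normSq (g i) = 0 := by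
      have hnn : ∀ j ∈ Finset.univ, (0:ℝ) ≤ Complex.normSq (g j) * 1 :=
        fun j _ => by simpa using Complex.normSq_nonneg (g j)
      have := (Finset.sum_eq_zero_iff_of_nonneg hnn).mp hsum i (Finset.mem_univ i)
      simpa using this
    exact Complex.normSq_eq_zero.mp this
  have hliV := hli V hVQ'
  have hliW := hli W hWQ'
  set S1 := Submodule.span ℂ (Set.range fun i => Vᵀ i) with hS1
  set S2 := Submodule.span ℂ (Set.range fun i => Wᵀ i) with hS2
  have hr1 : Module.finrank ℂ S1 = Fintype.card ι₁ := finrank_span_eq_card hliV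
  have hr2 : Module.finrank ℂ S2 = Fintype.card ι₂ := finrank_span_eq_card hliW
  have hsup : Module.finrank ℂ ↥(S1 ⊔ S2) ≤ N := by
    refine le_trans (Submodule.finrank_le _) ?_
    simp [Module.finrank_fintype_fun_eq_card]
  have hdim := Submodule.finrank_sup_add_finrank_inf_eq S1 S2
  have hpos : 0 < Module.finrank ℂ ↥(S1 ⊓ S2) := by omega
  obtain ⟨x, hx⟩ := Module.finrank_pos_iff_exists_ne_zero.mp hpos
  have hx1 : (x : Fin N → ℂ) ∈ S1 := x.2.1
  have hx2 : (x : Fin N → ℂ) ∈ S2 := x.2.2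
  have hxne : (x : Fin N → ℂ) ≠ 0 := fun h => hx (Subtype.ext h)
  obtain ⟨g, hg⟩ := (Submodule.mem_span_range_iff_exists_fun ℂ).mp hx1
  obtain ⟨e, he⟩ := (Submodule.mem_span_range_iff_exists_fun ℂ).mp hx2
  have hgx : V *ᵥ g = (x : Fin N → ℂ) := by rw [mulVec_eq_sum]; exact hg
  have hex : W *ᵥ e = (x : Fin N → ℂ) := by rw [mulVec_eq_sum]; exact he
  set qv := ∑ i, Complex.normSq (g i) with hqv
  set qw := ∑ i, Complex.normSq (e i) with hqw
  have hQv : star (x : Fin N → ℂ) ⬝ᵥ Q *ᵥ (x : Fin N → ℂ) = (qv : ℂ) := by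
    rw [← hgx, sq_form_diag V Q _ hVQ']; norm_num [hqv]
  have hQw : star (x : Fin N → ℂ) ⬝ᵥ Q *ᵥ (x : Fin N → ℂ) = (qw : ℂ) := by
    rw [← hex, sq_form_diag W Q _ hWQ']; norm_num [hqw]
  have hqvw : qv = qw := by
    have := hQv.symm.trans hQw
    exact_mod_cast this
  have hAv : star (x : Fin N → ℂ) ⬝ᵥ A *ᵥ (x : Fin N → ℂ)
      = ((∑ i, Complex.normSq (g i) * μ i : ℝ) : ℂ) := by
    rw [← hgx, sq_form_diag V A _ hVA]
  have hAw : star (x : Fin N → ℂ) ⬝ᵥ A *ᵥ (x : Fin N → ℂ)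
      = ((∑ i, Complex.normSq (e i) * ν i : ℝ) : ℂ) := by
    rw [← hex, sq_form_diag W A _ hWA]
  have hAvw : (∑ i, Complex.normSq (g i) * μ i) = ∑ i, Complex.normSq (e i) * ν i := by
    have := hAv.symm.trans hAw
    exact_mod_cast this
  have hqvpos : 0 < qv := by
    rcases Finset.exists_ne_zero_of_sum_ne_zero (s := Finset.univ)
      (f := fun i => g i • Vᵀ i) (by rw [hg]; exact hxne) with ⟨i, _, hi⟩
    have hgi : g i ≠ 0 := fun h => hi (by simp [h])
    exact Finset.sum_pos' (fun j _ => Complex.normSq_nonneg _)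
      ⟨i, Finset.mem_univ i, Complex.normSq_pos.mpr hgi⟩
  have hub : (∑ i, Complex.normSq (g i) * μ i) ≤ qv * c := by
    rw [hqv, Finset.sum_mul]
    exact Finset.sum_le_sum fun i _ =>
      mul_le_mul_of_nonneg_left (hμ i) (Complex.normSq_nonneg _)
  have hlb : qv * d ≤ ∑ i, Complex.normSq (e i) * ν i := by
    rw [hqvw, hqw, Finset.sum_mul]
    exact Finset.sum_le_sum fun i _ =>
      mul_le_mul_of_nonneg_left (hν i) (Complex.normSq_nonneg _)
  have hfin : qv * d ≤ qv * c := by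
    calc qv * d ≤ ∑ i, Complex.normSq (e i) * ν i := hlb
      _ = ∑ i, Complex.normSq (g i) * μ i := hAvw.symm
      _ ≤ qv * c := hub
  exact le_of_mul_le_mul_left (by simpa [mul_comm] using hfin) hqvpos

lemma charpoly_diagonal_fin (d : Fin N → ℂ) :
    (diagonal d).charpoly = ∏ i, (X - C (d i)) := by
  have h : charmatrix (diagonal d) = diagonal fun i => (X - C (d i)) := by
    ext i j
    by_cases h : i = j
    · subst h; simp [charmatrix_apply_eq]
    · simp [charmatrix_apply_ne _ _ _ h, diagonal_apply_ne _ h]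
  rw [Matrix.charpoly, h, det_diagonal]

lemma roots_charpoly_diagonal (t : Fin N → ℝ) :
    (diagonal fun i => (t i : ℂ)).charpoly.roots
      = Multiset.map (fun i => (t i : ℂ)) Finset.univ.val := by
  rw [charpoly_diagonal_fin]
  rw [show (∏ i, (X - C ((t i : ℂ)))) =
    ((Finset.univ.val.map fun i => ((t i : ℝ) : ℂ)).map fun a => X - C a).prod by
      rw [Multiset.map_map]; rfl]
  rw [Polynomial.roots_multiset_prod_X_sub_C]

lemma pencil_exists (Q A : Matrix (Fin N) (Fin N) ℂ) (hQ : Q.PosDef) (hA : A.IsHermitian) :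
    ∃ (μ : Fin N → ℝ) (V : Matrix (Fin N) (Fin N) ℂ),
      Antitone μ ∧
      (Q⁻¹ * A).charpoly.roots = Multiset.map (fun i => (μ i : ℂ)) Finset.univ.val ∧
      Vᴴ * Q * V = 1 ∧ Vᴴ * A * V = diagonal fun i => (μ i : ℂ) := by
  classical
  open scoped MatrixOrder in
  set R := CFC.sqrt Q with hRdef
  have hRR : R * R = Q := by
    open scoped MatrixOrder in exact CFC.sqrt_mul_sqrt_self Q hQ.posSemidef.nonneg
  have hRH : R.IsHermitian := by
    open scoped MatrixOrder in exact (CFC.sqrt_nonneg Q).posSemidef.1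
  have hRdet : IsUnit R.det := by
    have hQdet : Q.det ≠ 0 := hQ.det_pos.ne'
    rw [← hRR, det_mul] at hQdet
    exact isUnit_iff_ne_zero.mpr (left_ne_zero_of_mul hQdet)
  have hRiH : (R⁻¹).IsHermitian := hRH.inv
  have hRiR : R⁻¹ * R = 1 := nonsing_inv_mul R hRdet
  have hRRi : R * R⁻¹ = 1 := mul_nonsing_inv R hRdet
  set M := R⁻¹ * A * R⁻¹ with hMdef
  have hM : M.IsHermitian := by
    unfold Matrix.IsHermitian
    rw [hMdef, conjTranspose_mul, conjTranspose_mul, hRiH, hA]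
    rw [Matrix.mul_assoc]
  set Um := (hM.eigenvectorUnitary : Matrix (Fin N) (Fin N) ℂ) with hUm
  have hUsU : star Um * Um = 1 := Matrix.mem_unitaryGroup_iff'.mp hM.eigenvectorUnitary.2
  have hUUs : Um * star Um = 1 := Matrix.mem_unitaryGroup_iff.mp hM.eigenvectorUnitary.2
  have hUdet : IsUnit Um.det := isUnit_det_of_right_inverse hUUs
  have hUinv : Um⁻¹ = star Um := inv_eq_left_inv hUsU
  have hdiag : star Um * M * Um = diagonal (RCLike.ofReal ∘ hM.eigenvalues) :=
    (Unitary.conjStarAlgAut_star_apply (S := ℂ) _ M).symm.trans hM.conjStarAlgAut_star_eigenvectorUnitary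
  have hcp : (Q⁻¹ * A).charpoly = (diagonal fun i => ((hM.eigenvalues i : ℝ) : ℂ)).charpoly := by
    have h1 : Q⁻¹ * A = R⁻¹ * M * R := by
      rw [hMdef, Matrix.mul_assoc, Matrix.mul_assoc, hRiR, Matrix.mul_one,
        ← Matrix.mul_assoc, ← hRR, Matrix.mul_inv_rev]
    have h2 : (Q⁻¹ * A).charpoly = M.charpoly := by rw [h1, charpoly_conj R M hRdet]
    have h3 : M.charpoly = (diagonal (RCLike.ofReal ∘ hM.eigenvalues)).charpoly := by
      rw [← charpoly_conj Um M hUdet, hUinv, hdiag]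
    rw [h2, h3]; rfl
  obtain ⟨σ, hσ⟩ : ∃ σ : Equiv.Perm (Fin N), Monotone ((fun i => -hM.eigenvalues i) ∘ σ) :=
    ⟨Tuple.sort _, Tuple.monotone_sort _⟩
  set μ := fun i => hM.eigenvalues (σ i) with hμdef
  have hanti : Antitone μ := by
    intro i j hij
    have := hσ hij
    simp only [Function.comp_apply, neg_le_neg_iff] at this
    exact this
  set V := (R⁻¹ * Um).submatrix id σ with hVdef
  have hVH : Vᴴ = (star Um * R⁻¹).submatrix (σ) id := by
    rw [hVdef, conjTranspose_submatrix, conjTranspose_mul, hRiH]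
    rfl
  have hform : ∀ B : Matrix (Fin N) (Fin N) ℂ,
      Vᴴ * B * V = ((star Um * R⁻¹) * B * (R⁻¹ * Um)).submatrix σ σ := by
    intro B
    rw [hVH, hVdef, Matrix.submatrix_mul _ _ _ _ _ Function.bijective_id,
      Matrix.submatrix_mul _ _ _ _ _ Function.bijective_id]
    rfl
  refine ⟨μ, V, hanti, ?_, ?_, ?_⟩
  · rw [hcp, roots_charpoly_diagonal]
    have h4 : Multiset.map (fun i => ((μ i : ℝ) : ℂ)) Finset.univ.val
        = Multiset.map ((fun i => ((hM.eigenvalues i : ℝ) : ℂ)) ∘ σ) Finset.univ.val := rfl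
    rw [h4, ← Multiset.map_map, show Multiset.map (⇑σ) Finset.univ.val = Finset.univ.val from
      Multiset.map_univ_val_equiv σ]
  · rw [hform]
    have h5 : (star Um * R⁻¹) * Q * (R⁻¹ * Um) = 1 := by
      rw [← hRR]
      calc star Um * R⁻¹ * (R * R) * (R⁻¹ * Um)
          = star Um * ((R⁻¹ * R) * (R * R⁻¹)) * Um := by
            simp only [Matrix.mul_assoc]
        _ = 1 := by rw [hRiR, hRRi]; simpa using hUsU
    rw [h5, submatrix_one_equiv]
  · rw [hform]
    have h6 : (star Um * R⁻¹) * A * (R⁻¹ * Um) = diagonal (RCLike.ofReal ∘ hM.eigenvalues) := by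
      rw [← hdiag, hMdef]
      simp only [Matrix.mul_assoc]
    rw [h6, submatrix_diagonal_equiv]
    rfl

lemma form_col {ι : Type} [Fintype ι] (P : Matrix (Fin N) ι ℂ)
    (B : Matrix (Fin N) (Fin N) ℂ) (i j : ι) :
    star (Pᵀ i) ⬝ᵥ B *ᵥ Pᵀ j = (Pᴴ * B * P) i j := by
  simp only [dotProduct, mulVec, mul_apply, conjTranspose_apply, Pi.star_apply,
    transpose_apply, Finset.sum_mul, Finset.mul_sum]
  rw [Finset.sum_comm]
  exact Finset.sum_congr rfl fun r _ => Finset.sum_congr rfl fun s _ => by ring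

lemma insert_form (B : Matrix (Fin (n + 1)) (Fin (n + 1)) ℂ) (k : Fin (n + 1))
    (y z : Fin n → ℂ) :
    star (Fin.insertNth (α := fun _ => ℂ) k 0 y) ⬝ᵥ B *ᵥ (Fin.insertNth (α := fun _ => ℂ) k 0 z)
      = star y ⬝ᵥ (B.submatrix k.succAbove k.succAbove) *ᵥ z := by
  simp only [dotProduct, mulVec, Pi.star_apply, submatrix_apply]
  rw [Fin.sum_univ_succAbove (fun r => star (Fin.insertNth (α := fun _ => ℂ) k 0 y r) *
    ∑ s, B r s * Fin.insertNth (α := fun _ => ℂ) k 0 z s) k]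
  simp only [Fin.insertNth_apply_same, star_zero, zero_mul, zero_add,
    Fin.insertNth_apply_succAbove]
  refine Finset.sum_congr rfl fun r _ => ?_
  congr 1
  rw [Fin.sum_univ_succAbove
    (fun s => B (k.succAbove r) s * Fin.insertNth (α := fun _ => ℂ) k 0 z s) k]
  simp [Fin.insertNth_apply_same, Fin.insertNth_apply_succAbove]

lemma insert_eq_zero_iff (k : Fin (n + 1)) (y : Fin n → ℂ) :
    Fin.insertNth (α := fun _ => ℂ) k 0 y = 0 ↔ y = 0 := by
  constructor
  · intro h
    funext i
    have := congrFun h (k.succAbove i)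
    simpa [Fin.insertNth_apply_succAbove] using this
  · rintro rfl
    funext r
    rcases eq_or_ne r k with rfl | hr
    · simp
    · obtain ⟨i, rfl⟩ := Fin.exists_succAbove_eq hr
      simp [Fin.insertNth_apply_succAbove]

lemma posDef_submatrix (Q : Matrix (Fin (n + 1)) (Fin (n + 1)) ℂ) (hQ : Q.PosDef)
    (k : Fin (n + 1)) : (Q.submatrix k.succAbove k.succAbove).PosDef := by
  refine Matrix.PosDef.of_dotProduct_mulVec_pos (hQ.1.submatrix _) fun y hy => ?_
  rw [← insert_form]
  exact hQ.dotProduct_mulVec_pos (fun h => hy ((insert_eq_zero_iff k y).mp h))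

lemma embed_form {ι : Type} [Fintype ι] (W' : Matrix (Fin n) ι ℂ)
    (B : Matrix (Fin (n + 1)) (Fin (n + 1)) ℂ) (k : Fin (n + 1)) :
    (Matrix.of fun r i => Fin.insertNth (α := fun _ => ℂ) k 0 (fun s => W' s i) r)ᴴ * B *
        (Matrix.of fun r i => Fin.insertNth (α := fun _ => ℂ) k 0 (fun s => W' s i) r)
      = W'ᴴ * (B.submatrix k.succAbove k.succAbove) * W' := by
  set W : Matrix (Fin (n + 1)) ι ℂ :=
    Matrix.of fun r i => Fin.insertNth (α := fun _ => ℂ) k 0 (fun s => W' s i) r with hW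
  ext i j
  rw [← form_col, ← form_col]
  have hcol : ∀ i, Wᵀ i = Fin.insertNth (α := fun _ => ℂ) k 0 (W'ᵀ i) := by
    intro i; funext r; rfl
  rw [hcol, hcol, insert_form]

lemma restrict_form {ι κ : Type} [Fintype κ] [DecidableEq κ] (U : Matrix (Fin N) κ ℂ)
    (B : Matrix (Fin N) (Fin N) ℂ) (f : ι → κ) :
    (U.submatrix id f)ᴴ * B * (U.submatrix id f) = (Uᴴ * B * U).submatrix f f := by
  rw [conjTranspose_submatrix,
    show (Uᴴ * B * U).submatrix f f = (Uᴴ * B).submatrix f id * U.submatrix id f from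
      Matrix.submatrix_mul _ _ _ _ _ Function.bijective_id,
    show (Uᴴ * B).submatrix f id = Uᴴ.submatrix f id * B.submatrix id id from
      Matrix.submatrix_mul _ _ _ _ _ Function.bijective_id,
    Matrix.submatrix_id_id]

lemma card_subtype_le {m : ℕ} (p : Fin m) :
    Fintype.card {i : Fin m // i ≤ p} = (p : ℕ) + 1 := by
  rw [Fintype.card_subtype,
    show Finset.filter (fun i => i ≤ p) Finset.univ = Finset.Iic p from
      Finset.ext fun i => by simp]
  exact Fin.card_Iic p

lemma card_subtype_ge {m : ℕ} (p : Fin m) :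
    Fintype.card {i : Fin m // p ≤ i} = m - (p : ℕ) := by
  rw [Fintype.card_subtype,
    show Finset.filter (fun i => p ≤ i) Finset.univ = Finset.Ici p from
      Finset.ext fun i => by simp]
  exact Fin.card_Ici p

end Stmt1Aux

open Stmt1Aux

/-- If `Q` is Hermitian positive definite and `A` is Hermitian, then the eigenvalues of
`Q⁻¹A` and of the principal submatrices `Q′⁻¹A′` (deleting the `k`-th row and column)
are all real, and when listed in decreasing order with multiplicity they interlace. -/
theorem stmt1 (n : ℕ) (Q A : Matrix (Fin (n + 1)) (Fin (n + 1)) ℂ)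
    (hQ : Q.PosDef) (hA : A.IsHermitian) (k : Fin (n + 1)) :
    (∀ z ∈ ((Q⁻¹ * A).charpoly).roots, z.im = 0) ∧
    (∀ z ∈ (((Q.submatrix k.succAbove k.succAbove)⁻¹
        * (A.submatrix k.succAbove k.succAbove)).charpoly).roots, z.im = 0) ∧
    (∀ (a : Fin (n + 1) → ℝ) (b : Fin n → ℝ), Antitone a → Antitone b →
      ((Q⁻¹ * A).charpoly).roots = Multiset.map (fun i => (a i : ℂ)) Finset.univ.val →
      (((Q.submatrix k.succAbove k.succAbove)⁻¹
        * (A.submatrix k.succAbove k.succAbove)).charpoly).roots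
          = Multiset.map (fun i => (b i : ℂ)) Finset.univ.val →
      ∀ j : Fin n, a j.succ ≤ b j ∧ b j ≤ a j.castSucc) := by
  classical
  obtain ⟨μ, V, hμa, hμr, hVQ, hVA⟩ := pencil_exists Q A hQ hA
  have hQ' := posDef_submatrix Q hQ k
  have hA' : (A.submatrix k.succAbove k.succAbove).IsHermitian := hA.submatrix _
  obtain ⟨ν, W', hνa, hνr, hWQ', hWA'⟩ := pencil_exists _ _ hQ' hA'
  set W : Matrix (Fin (n + 1)) (Fin n) ℂ :=
    Matrix.of fun r i => Fin.insertNth (α := fun _ => ℂ) k 0 (fun s => W' s i) r with hWdef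
  have hWQ : Wᴴ * Q * W = 1 := by rw [hWdef, embed_form]; exact hWQ'
  have hWA : Wᴴ * A * W = diagonal fun i => (ν i : ℂ) := by rw [hWdef, embed_form]; exact hWA'
  refine ⟨?_, ?_, ?_⟩
  · rw [hμr]; intro z hz
    obtain ⟨i, _, rfl⟩ := Multiset.mem_map.mp hz
    simp
  · rw [hνr]; intro z hz
    obtain ⟨i, _, rfl⟩ := Multiset.mem_map.mp hz
    simp
  · intro a b ha hb hra hrb j
    have hae : a = μ := by
      refine antitone_eq ha hμa (Multiset.map_injective Complex.ofReal_injective ?_)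
      rw [Multiset.map_map, Multiset.map_map]
      exact hra.symm.trans hμr
    have hbe : b = ν := by
      refine antitone_eq hb hνa (Multiset.map_injective Complex.ofReal_injective ?_)
      rw [Multiset.map_map, Multiset.map_map]
      exact hrb.symm.trans hνr
    rw [hae, hbe]
    constructor
    · -- a j.succ ≤ b j
      refine core (Q := Q) (A := A)
        (W.submatrix id (fun i : {i : Fin n // j ≤ i} => i.1))
        (V.submatrix id (fun i : {i : Fin (n + 1) // i ≤ j.succ} => i.1))
        (fun i => ν i.1) (fun i => μ i.1) ?_ ?_ ?_ ?_ ?_ ?_ ?_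
      · rw [restrict_form, hWQ, Matrix.submatrix_one _ (fun x y h => Subtype.ext h)]
      · rw [restrict_form, hWA, Matrix.submatrix_diagonal _ _ (fun x y h => Subtype.ext h)]
        rfl
      · rw [restrict_form, hVQ, Matrix.submatrix_one _ (fun x y h => Subtype.ext h)]
      · rw [restrict_form, hVA, Matrix.submatrix_diagonal _ _ (fun x y h => Subtype.ext h)]
        rfl
      · exact fun i => hνa i.2
      · exact fun i => hμa i.2
      · rw [card_subtype_ge, card_subtype_le, Fin.val_succ]
        have := j.isLt
        omega
    · -- b j ≤ a j.castSucc
      refine core (Q := Q) (A := A)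
        (V.submatrix id (fun i : {i : Fin (n + 1) // j.castSucc ≤ i} => i.1))
        (W.submatrix id (fun i : {i : Fin n // i ≤ j} => i.1))
        (fun i => μ i.1) (fun i => ν i.1) ?_ ?_ ?_ ?_ ?_ ?_ ?_
      · rw [restrict_form, hVQ, Matrix.submatrix_one _ (fun x y h => Subtype.ext h)]
      · rw [restrict_form, hVA, Matrix.submatrix_diagonal _ _ (fun x y h => Subtype.ext h)]
        rfl
      · rw [restrict_form, hWQ, Matrix.submatrix_one _ (fun x y h => Subtype.ext h)]
      · rw [restrict_form, hWA, Matrix.submatrix_diagonal _ _ (fun x y h => Subtype.ext h)]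
        rfl
      · exact fun i => hμa i.2
      · exact fun i => hνa i.2
      · rw [card_subtype_ge, card_subtype_le, Fin.coe_castSucc]
        have := j.isLt
        omega
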